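/- Let S_N be the star graph on N ≥ 3 vertices (one center adjacent to all N − 1 leaves, no other edges) and let s be a real number. Then the eigenvalues of the Mellin-transformed path Laplacian L̃_Mell(s) of S_N are: 0 with multiplicity 1, N with multiplicity 1, and 1 + (N − 1)·2^{−s} with multiplicity N − 2. Equivalently, each eigenvalue of L̃_Mell(s) has the form λ_i(K_N)·2^{−s} + λ_i(L)·(1 − 2^{−s}), where λ_i(K_N) and λ_i(L) are corresponding eigenvalues of the complete-graph Laplacian and of the star Laplacian. -/

import Mathlib

open Finset Matrix Filter Real Topology

/-- The `d`-path Laplacian matrix of a graph `G` on `Fin N`: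
`(L_d)_{ii} = #{j : dist(i,j) = d}`, `(L_d)_{ij} = -1` if `i ≠ j` and `dist(i,j) = d`,
and `0` otherwise. -/
noncomputable def pathLaplacian {N : ℕ} (G : SimpleGraph (Fin N)) (d : ℕ) :
    Matrix (Fin N) (Fin N) ℝ := fun i j =>
  if i = j then ((univ.filter fun k => G.dist i k = d).card : ℝ)
  else if G.dist i j = d then -1 else 0

/-- The diameter `d_max` of `G`: the maximum shortest-path distance over all pairs. -/
noncomputable def graphDiam {N : ℕ} (G : SimpleGraph (Fin N)) : ℕ :=
  univ.sup fun p : Fin N × Fin N => G.dist p.1 p.2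

/-- The Mellin-transformed path Laplacian `L̃_Mell(s) = Σ_{d=1}^{d_max} d^{-s} L_d`. -/
noncomputable def mellinLap {N : ℕ} (G : SimpleGraph (Fin N)) (s : ℝ) :
    Matrix (Fin N) (Fin N) ℝ :=
  ∑ d ∈ Icc 1 (graphDiam G), (d : ℝ) ^ (-s) • pathLaplacian G d

/-- The Laplace-transformed path Laplacian `L̃_Lapl(λ) = L_1 + Σ_{d=2}^{d_max} e^{-λd} L_d`. -/
noncomputable def laplaceLap {N : ℕ} (G : SimpleGraph (Fin N)) (lam : ℝ) :
    Matrix (Fin N) (Fin N) ℝ :=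
  pathLaplacian G 1 + ∑ d ∈ Icc 2 (graphDiam G), Real.exp (-(lam * d)) • pathLaplacian G d

/-- `λ₂(M)`: infimum of the quadratic form over Euclidean-unit vectors orthogonal to
the all-ones vector. -/
noncomputable def lamTwo {N : ℕ} (M : Matrix (Fin N) (Fin N) ℝ) : ℝ :=
  sInf {r | ∃ x : Fin N → ℝ, ∑ i, x i ^ 2 = 1 ∧ ∑ i, x i = 0 ∧ r = x ⬝ᵥ M.mulVec x}

/-- `λ_max(M)`: supremum of the quadratic form over Euclidean-unit vectors. -/
noncomputable def lamMax {N : ℕ} (M : Matrix (Fin N) (Fin N) ℝ) : ℝ :=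
  sSup {r | ∃ x : Fin N → ℝ, ∑ i, x i ^ 2 = 1 ∧ r = x ⬝ᵥ M.mulVec x}

/-- The star graph on `Fin N`: the vertex `0` is adjacent to all other vertices,
and there are no other edges. -/
def starGraph (N : ℕ) : SimpleGraph (Fin N) where
  Adj i j := i ≠ j ∧ ((i : ℕ) = 0 ∨ (j : ℕ) = 0)
  symm := ⟨fun i j h => ⟨h.1.symm, h.2.symm⟩⟩
  loopless := ⟨fun i h => h.1 rfl⟩

open Polynomial

section star
variable {N : ℕ} [NeZero N]

lemma star_adj {i j : Fin N} : (starGraph N).Adj i j ↔ i ≠ j ∧ (i = 0 ∨ j = 0) := by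
  show i ≠ j ∧ ((i : ℕ) = 0 ∨ (j : ℕ) = 0) ↔ _
  rw [Fin.val_eq_zero_iff, Fin.val_eq_zero_iff]

lemma star_dist_one {i j : Fin N} (hij : i ≠ j) (h : i = 0 ∨ j = 0) :
    (starGraph N).dist i j = 1 :=
  SimpleGraph.dist_eq_one_iff_adj.2 (star_adj.2 ⟨hij, h⟩)

lemma star_dist_two {i j : Fin N} (hij : i ≠ j) (hi : i ≠ 0) (hj : j ≠ 0) :
    (starGraph N).dist i j = 2 := by
  have a1 : (starGraph N).Adj i 0 := star_adj.2 ⟨hi, Or.inr rfl⟩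
  have a2 : (starGraph N).Adj 0 j := star_adj.2 ⟨fun h => hj h.symm, Or.inl rfl⟩
  have hle : (starGraph N).dist i j ≤ 2 := by
    simpa using SimpleGraph.dist_le (SimpleGraph.Walk.cons a1 (SimpleGraph.Walk.cons a2 SimpleGraph.Walk.nil))
  have h0 : (starGraph N).dist i j ≠ 0 := by
    have := ((SimpleGraph.Walk.cons a1 (SimpleGraph.Walk.cons a2 SimpleGraph.Walk.nil)).reachable).pos_dist_of_ne hij
    omega
  have h1 : (starGraph N).dist i j ≠ 1 := fun h =>
    (star_adj.1 (SimpleGraph.dist_eq_one_iff_adj.1 h)).2.elim (fun h => hi h) fun h => hj h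
  omega

lemma star_dist_le {i j : Fin N} : (starGraph N).dist i j ≤ 2 := by
  by_cases hij : i = j
  · simp [hij, SimpleGraph.dist_self]
  by_cases h : i = 0 ∨ j = 0
  · simp [star_dist_one hij h]
  · push_neg at h
    simp [star_dist_two hij h.1 h.2]

end star

section star2
variable {N : ℕ} [NeZero N] (hN : 3 ≤ N)
include hN

lemma star_diam : graphDiam (starGraph N) = 2 := by
  apply le_antisymm
  · exact Finset.sup_le fun p _ => star_dist_le
  · have h12 : (⟨1, by omega⟩ : Fin N) ≠ ⟨2, by omega⟩ := by simp [Fin.ext_iff]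
    have h1 : (⟨1, by omega⟩ : Fin N) ≠ 0 := by simp [Fin.ext_iff]
    have h2 : (⟨2, by omega⟩ : Fin N) ≠ 0 := by simp [Fin.ext_iff]
    have := Finset.le_sup (f := fun p : Fin N × Fin N => (starGraph N).dist p.1 p.2)
      (mem_univ (⟨⟨1, by omega⟩, ⟨2, by omega⟩⟩ : Fin N × Fin N))
    simpa [star_dist_two h12 h1 h2, graphDiam] using this

-- cards
lemma card_dist_one_center : (univ.filter fun k : Fin N => (starGraph N).dist 0 k = 1).card = N - 1 := by
  have : (univ.filter fun k : Fin N => (starGraph N).dist 0 k = 1) = univ.erase 0 := by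
    ext k
    simp only [mem_filter, mem_univ, true_and, mem_erase, and_true]
    constructor
    · rintro h rfl; simp [SimpleGraph.dist_self] at h
    · intro hk; exact star_dist_one (fun h => hk h.symm) (Or.inl rfl)
  rw [this, card_erase_of_mem (mem_univ _), card_univ, Fintype.card_fin]

lemma card_dist_two_center : (univ.filter fun k : Fin N => (starGraph N).dist 0 k = 2).card = 0 := by
  rw [Finset.card_eq_zero, Finset.filter_eq_empty_iff]
  intro k _
  by_cases hk : k = 0
  · simp [hk, SimpleGraph.dist_self]
  · rw [star_dist_one (fun h => hk h.symm) (Or.inl rfl)]; omega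

lemma card_dist_one_leaf {i : Fin N} (hi : i ≠ 0) :
    (univ.filter fun k : Fin N => (starGraph N).dist i k = 1).card = 1 := by
  have : (univ.filter fun k : Fin N => (starGraph N).dist i k = 1) = {0} := by
    ext k
    simp only [mem_filter, mem_univ, true_and, mem_singleton]
    constructor
    · intro h
      by_contra hk
      by_cases hik : i = k
      · simp [hik, SimpleGraph.dist_self] at h
      · rw [star_dist_two hik hi hk] at h; omega
    · rintro rfl; exact star_dist_one hi (Or.inr rfl)
  rw [this, card_singleton]

lemma card_dist_two_leaf {i : Fin N} (hi : i ≠ 0) :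
    (univ.filter fun k : Fin N => (starGraph N).dist i k = 2).card = N - 2 := by
  have : (univ.filter fun k : Fin N => (starGraph N).dist i k = 2) = (univ.erase 0).erase i := by
    ext k
    simp only [mem_filter, mem_univ, true_and, mem_erase, and_true]
    constructor
    · intro h
      refine ⟨fun hk => ?_, fun hk => ?_⟩
      · subst hk; simp [SimpleGraph.dist_self] at h
      · subst hk; rw [star_dist_one hi (Or.inr rfl)] at h; omega
    · rintro ⟨hk1, hk2⟩; exact star_dist_two (fun h => hk1 h.symm) hi hk2
  rw [this, card_erase_of_mem (mem_erase.2 ⟨hi, mem_univ _⟩), card_erase_of_mem (mem_univ _),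
    card_univ, Fintype.card_fin]
  omega

end star2

noncomputable def Mstar (N : ℕ) [NeZero N] (t : ℝ) : Matrix (Fin N) (Fin N) ℝ := fun i j =>
  if i = j then (if i = 0 then (N : ℝ) - 1 else 1 + ((N : ℝ) - 2) * t)
  else if i = 0 ∨ j = 0 then -1 else -t

lemma mellinLap_star_eq {N : ℕ} [NeZero N] (hN : 3 ≤ N) (s : ℝ) :
    mellinLap (starGraph N) s = Mstar N ((2 : ℝ) ^ (-s)) := by
  have hI : Icc 1 (graphDiam (starGraph N)) = {1, 2} := by
    rw [star_diam hN]; rfl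
  funext i j
  have hsum : mellinLap (starGraph N) s i j =
      ((1 : ℝ)) ^ (-s) * pathLaplacian (starGraph N) 1 i j
        + ((2 : ℝ)) ^ (-s) * pathLaplacian (starGraph N) 2 i j := by
    rw [mellinLap, hI]
    rw [Finset.sum_insert (by simp), Finset.sum_singleton]
    simp [Matrix.add_apply, Matrix.smul_apply]
  rw [hsum, Real.one_rpow, one_mul]
  by_cases hij : i = j
  · subst hij
    by_cases hi : i = 0
    · subst hi
      simp only [pathLaplacian, Mstar, if_pos rfl, card_dist_one_center hN, card_dist_two_center hN]
      push_cast [Nat.cast_sub (by omega : 1 ≤ N)]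
      ring
    · simp only [pathLaplacian, Mstar, if_pos rfl, if_neg hi,
        card_dist_one_leaf (hN := hN) hi, card_dist_two_leaf (hN := hN) hi]
      push_cast [Nat.cast_sub (by omega : 2 ≤ N)]
      ring
  · by_cases h0 : i = 0 ∨ j = 0
    · have h1 : (starGraph N).dist i j = 1 := star_dist_one hij h0
      simp [pathLaplacian, Mstar, if_neg hij, h1, h0]
    · push_neg at h0
      have h2 : (starGraph N).dist i j = 2 := star_dist_two hij h0.1 h0.2
      simp [pathLaplacian, Mstar, if_neg hij, h2, not_or.2 h0]


lemma det_smul_one_sub {K : Type*} [Field K] {l : Type*} [Fintype l] [DecidableEq l]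
    (a : K) (ha : a ≠ 0) (W : Matrix l l K) :
    (a • (1 : Matrix l l K) - W).det = a ^ (Fintype.card l) * (1 - a⁻¹ • W).det := by
  have h : a • (1 : Matrix l l K) - W = a • ((1 : Matrix l l K) - a⁻¹ • W) := by
    rw [smul_sub, smul_smul, mul_inv_cancel₀ ha, one_smul]
  rw [h, Matrix.det_smul]

lemma key_det {K : Type*} [Field K] {l m : Type*} [Fintype l] [Fintype m]
    [DecidableEq l] [DecidableEq m] (a : K) (ha : a ≠ 0)
    (U : Matrix l m K) (V : Matrix m l K) :
    (a • (1 : Matrix l l K) - U * V).det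
      = a ^ (Fintype.card l) * (1 - a⁻¹ • (V * U) : Matrix m m K).det := by
  rw [det_smul_one_sub a ha]
  congr 1
  have h1 : (1 : Matrix l l K) - a⁻¹ • (U * V)
      = (1 : Matrix l l K) + (-(a⁻¹ • U)) * V := by
    rw [sub_eq_add_neg, Matrix.neg_mul, Matrix.smul_mul]
  have h2 : (1 : Matrix m m K) - a⁻¹ • (V * U)
      = (1 : Matrix m m K) + V * (-(a⁻¹ • U)) := by
    rw [Matrix.mul_neg, Matrix.mul_smul, sub_eq_add_neg]
  rw [h1, h2, Matrix.det_one_add_mul_comm]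

lemma det_smul_one_sub_mul {n : ℕ} (hn : 2 ≤ n) (α : Polynomial ℝ) (hα : α ≠ 0)
    (A : Matrix (Fin n) (Fin 2) (Polynomial ℝ)) (B : Matrix (Fin 2) (Fin n) (Polynomial ℝ)) :
    (α • (1 : Matrix (Fin n) (Fin n) (Polynomial ℝ)) - A * B).det
      = α ^ (n - 2) * (α • (1 : Matrix (Fin 2) (Fin 2) (Polynomial ℝ)) - B * A).det := by
  set K := FractionRing (Polynomial ℝ)
  set f := algebraMap (Polynomial ℝ) K with hf
  have hinj : Function.Injective f := IsFractionRing.injective _ _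
  apply hinj
  have ha : f α ≠ 0 := fun h => hα (hinj (by simpa using h))
  have hmap : ∀ {p q : Type} [Fintype p] [Fintype q] [DecidableEq p]
      [DecidableEq q] (β : Polynomial ℝ) (U : Matrix p q (Polynomial ℝ))
      (V : Matrix q p (Polynomial ℝ)),
      ((β • (1 : Matrix p p (Polynomial ℝ)) - U * V).map f)
        = f β • (1 : Matrix p p K) - U.map f * V.map f := by
    intro p q _ _ _ _ β U V
    ext i j
    simp [Matrix.map_apply, Matrix.sub_apply, Matrix.smul_apply, Matrix.one_apply,
      Matrix.mul_apply, map_sum, _root_.map_mul, apply_ite f, smul_eq_mul]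
  rw [_root_.map_mul, map_pow, RingHom.map_det, RingHom.map_det]
  simp only [RingHom.mapMatrix_apply]
  rw [hmap, hmap,
    key_det (f α) ha, det_smul_one_sub (f α) ha]
  simp only [Fintype.card_fin]
  rw [← mul_assoc, ← pow_add]
  congr 2
  omega

open Polynomial

noncomputable def Astar (N : ℕ) [NeZero N] : Matrix (Fin N) (Fin 2) ℝ :=
  fun i k => if k = 0 then 1 else if i = 0 then 1 else 0

noncomputable def Bstar (N : ℕ) [NeZero N] (t : ℝ) : Matrix (Fin 2) (Fin N) ℝ :=
  fun k j => if k = 0 then (if j = 0 then -1 else -t)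
    else (if j = 0 then ((N : ℝ) - 1) * (1 - t) else -(1 - t))

lemma Mstar_decomp {N : ℕ} [NeZero N] (t : ℝ) :
    Mstar N t = (1 + ((N : ℝ) - 1) * t) • 1 + Astar N * Bstar N t := by
  funext i j
  simp only [Mstar, Astar, Bstar, Matrix.add_apply, Matrix.smul_apply, Matrix.one_apply,
    Matrix.mul_apply, Fin.sum_univ_two, smul_eq_mul]
  by_cases hij : i = j
  · subst hij
    by_cases hi : i = 0 <;> simp [hi] <;> ring
  · by_cases hi : i = 0 <;> by_cases hj : j = 0 <;>
      simp [hij, hi, hj, Ne.symm] <;> ring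

lemma charmatrix_decomp {N : ℕ} (M : Matrix (Fin N) (Fin N) ℝ) (μ : ℝ)
    (A₀ : Matrix (Fin N) (Fin 2) ℝ) (B₀ : Matrix (Fin 2) (Fin N) ℝ)
    (h : M = μ • 1 + A₀ * B₀) :
    charmatrix M = (X - C μ) • (1 : Matrix (Fin N) (Fin N) ℝ[X])
      - (A₀.map C) * (B₀.map C) := by
  subst h
  ext i j
  rw [charmatrix_apply]
  simp only [Matrix.diagonal_apply, Matrix.add_apply, Matrix.smul_apply, Matrix.one_apply,
    Matrix.mul_apply, Fin.sum_univ_two, smul_eq_mul, Matrix.sub_apply, Matrix.map_apply,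
    map_add, _root_.map_mul, C_add, C_mul]
  by_cases hij : i = j <;> simp [hij] <;> ring

lemma sum_ite_zero_real {N : ℕ} [NeZero N] (a b : ℝ) :
    ∑ j : Fin N, (if j = 0 then a else b) = a + ((N : ℝ) - 1) * b := by
  have : ∀ j : Fin N, (if j = 0 then a else b) = b + (if j = 0 then a - b else 0) := by
    intro j; by_cases hj : j = 0 <;> simp [hj]
  rw [Finset.sum_congr rfl fun j _ => this j, Finset.sum_add_distrib,
    Finset.sum_ite_eq' univ (0 : Fin N) (fun _ => a - b), if_pos (mem_univ _),
    Finset.sum_const, card_univ, Fintype.card_fin, nsmul_eq_mul]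
  ring

lemma Bstar_mul_Astar {N : ℕ} [NeZero N] (t : ℝ) :
    Bstar N t * Astar N
      = !![-(1 + ((N : ℝ) - 1) * t), -1; 0, ((N : ℝ) - 1) * (1 - t)] := by
  funext k l
  rw [Matrix.mul_apply]
  fin_cases k <;> fin_cases l <;> simp [Bstar, Astar, mul_ite]
  · rw [sum_ite_zero_real]; ring
  · rw [sum_ite_zero_real]; ring

lemma charpoly_Mstar {N : ℕ} [NeZero N] (hN : 3 ≤ N) (t : ℝ) :
    (Mstar N t).charpoly =
      X * (X - C (N : ℝ)) * (X - C (1 + ((N : ℝ) - 1) * t)) ^ (N - 2) := by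
  set μ : ℝ := 1 + ((N : ℝ) - 1) * t with hμ
  have hcm := charmatrix_decomp (Mstar N t) μ (Astar N) (Bstar N t) (Mstar_decomp t)
  rw [Matrix.charpoly, hcm, det_smul_one_sub_mul (by omega) _ (X_sub_C_ne_zero μ)]
  have hBA : (Bstar N t).map C * (Astar N).map C = (Bstar N t * Astar N).map C :=
    (Matrix.map_mul).symm
  rw [hBA, Bstar_mul_Astar]
  have hdet : ((X - C μ) • (1 : Matrix (Fin 2) (Fin 2) ℝ[X])
      - (!![-(1 + ((N : ℝ) - 1) * t), -1; 0, ((N : ℝ) - 1) * (1 - t)]).map C).det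
      = X * (X - C (N : ℝ)) := by
    rw [Matrix.det_fin_two]
    simp [Matrix.sub_apply, Matrix.smul_apply, Matrix.one_apply, Matrix.map_apply, hμ,
      C_add, C_mul, C_sub, C_neg, C_1, smul_eq_mul]
    ring
  rw [hdet]
  ring


/-- For the star graph `S_N` with `N ≥ 3`, the eigenvalues of
`L̃_Mell(s)` are `0` (multiplicity 1), `N` (multiplicity 1) and `1 + (N−1)·2^{−s}`
(multiplicity `N − 2`); equivalently, its characteristic polynomial is
`X · (X − N) · (X − (1 + (N−1)·2^{−s}))^{N−2}`. -/
theorem mellinLap_starGraph_eigenvalues (N : ℕ) (hN : 3 ≤ N) (s : ℝ) :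
    (mellinLap (starGraph N) s).charpoly =
      Polynomial.X * (Polynomial.X - Polynomial.C (N : ℝ)) *
        (Polynomial.X - Polynomial.C (1 + ((N : ℝ) - 1) * (2 : ℝ) ^ (-s))) ^ (N - 2) := by
  have : NeZero N := ⟨by omega⟩
  rw [mellinLap_star_eq hN s, charpoly_Mstar hN]
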